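/- Let W be the generalized Witt algebra and D ∈ Der(W, W⊗W) a homogeneous derivation of degree 0 (with respect to the A-gradation). Then D vanishes on the torus: D(∂) = 0 for all ∂ ∈ T = W₀. -/

import Mathlib

set_option maxHeartbeats 1000000


open TensorProduct

/-- The homogeneous component `V_x = Σ_{x₁+x₂=x} W_{x₁} ⊗ W_{x₂}` of `V = W ⊗ W`
for the generalized Witt algebra. -/
noncomputable def wittVx {F : Type*} [Field F] {n : ℕ} {A : AddSubgroup (Fin n → F)}
    {L : Type*} [LieRing L] [LieAlgebra F L]
    (t : A → (Fin n → F) →ₗ[F] L) (x : A) : Submodule F (L ⊗[F] L) :=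
  Submodule.span F {w | ∃ (x₁ x₂ : A) (d d' : Fin n → F),
    x₁ + x₂ = x ∧ w = t x₁ d ⊗ₜ[F] t x₂ d'}

/-- For the generalized Witt algebra `W`, any homogeneous derivation
`D : W → W ⊗ W` of degree `0` vanishes on the torus `T = W₀`. -/
theorem witt_bialg_stmt14 {F : Type*} [Field F] [CharZero F] {n : ℕ}
    {A : AddSubgroup (Fin n → F)}
    (hA : Submodule.span F (A : Set (Fin n → F)) = ⊤)
    {L : Type*} [LieRing L] [LieAlgebra F L]
    (t : A → (Fin n → F) →ₗ[F] L)
    (ℬ : Module.Basis (A × Fin n) F L)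
    (hℬ : ∀ (x : A) (i : Fin n), ℬ (x, i) = t x (Pi.single i 1))
    (hbr : ∀ (x y : A) (d d' : Fin n → F),
      ⁅t x d, t y d'⁆ = t (x + y)
        ((∑ i, d i * (y : Fin n → F) i) • d' - (∑ i, d' i * (x : Fin n → F) i) • d))
    (D : L →ₗ[F] L ⊗[F] L)
    (hD : ∀ u w : L, D ⁅u, w⁆ = ⁅u, D w⁆ - ⁅w, D u⁆)
    (hdeg : ∀ y : A, ∀ u ∈ LinearMap.range (t y), D u ∈ wittVx t y) :
    ∀ u ∈ LinearMap.range (t 0), D u = 0 := by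
  classical
  -- expansion of t z w in the basis
  have ht : ∀ (z : A) (w : Fin n → F), t z w = ∑ i, w i • ℬ (z, i) := by
    intro z w
    have hw : w = ∑ i, w i • (Pi.single i (1:F) : Fin n → F) := by
      ext j
      simp [Pi.single_apply, Finset.sum_apply]
    calc t z w = t z (∑ i, w i • (Pi.single i (1:F) : Fin n → F)) := by rw [← hw]
    _ = ∑ i, w i • ℬ (z, i) := by
        rw [map_sum]
        exact Finset.sum_congr rfl fun i _ => by rw [map_smul, hℬ]
  -- coordinates of t z w
  have hrepr : ∀ (z : A) (w : Fin n → F) (p : A × Fin n),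
      ℬ.repr (t z w) p = if p.1 = z then w p.2 else 0 := by
    intro z w p
    rw [ht, map_sum]
    rcases p with ⟨z', k⟩
    by_cases hz : z' = z
    · subst hz
      rw [Finset.sum_apply']
      rw [Finset.sum_eq_single k]
      · simp [Finsupp.single_apply]
      · intro b _ hb
        simp [Finsupp.single_apply, Prod.ext_iff, hb]
      · simp
    · rw [Finset.sum_apply']
      rw [Finset.sum_eq_zero]
      · simp [hz]
      · intro b _
        simp [Finsupp.single_apply, Prod.ext_iff, Ne.symm hz, hz]
  -- Step A: torus acts on wittVx t y by the scalar ⟨e,y⟩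
  have stepA : ∀ (e : Fin n → F) (y : A) (v : L ⊗[F] L), v ∈ wittVx t y →
      ⁅t 0 e, v⁆ = (∑ k, e k * (y : Fin n → F) k) • v := by
    intro e y v hv
    induction hv using Submodule.span_induction with
    | mem w hw =>
      obtain ⟨x₁, x₂, d, d', hx, rfl⟩ := hw
      have hb : ∀ (x : A) (d : Fin n → F),
          ⁅t 0 e, t x d⁆ = (∑ k, e k * (x : Fin n → F) k) • t x d := by
        intro x d
        rw [hbr]
        have h0 : ((0 : A) : Fin n → F) = 0 := rfl
        simp [h0, zero_add]
      rw [TensorProduct.LieModule.lie_tmul_right, hb, hb, ← smul_tmul', tmul_smul, ← add_smul]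
      rw [← hx]
      congr 1
      push_cast
      rw [← Finset.sum_add_distrib]
      congr 1; ext k; simp [Pi.add_apply, mul_add]
    | zero => simp
    | add u w hu hw ihu ihw => rw [lie_add, ihu, ihw, smul_add]
    | smul a u hu ihu => rw [lie_smul, ihu, smul_comm]
  -- Step B: ⁅t y d, D (t 0 e)⁆ = 0
  have stepB : ∀ (e : Fin n → F) (y : A) (d : Fin n → F),
      ⁅t y d, D (t 0 e)⁆ = 0 := by
    intro e y d
    have h := hD (t y d) (t 0 e)
    have h0 : ((0 : A) : Fin n → F) = 0 := rfl
    have h1 : ⁅t y d, t 0 e⁆ = -((∑ k, e k * (y : Fin n → F) k) • t y d) := by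
      rw [hbr]
      simp [h0, add_zero]
    have h2 : ⁅t 0 e, D (t y d)⁆ = (∑ k, e k * (y : Fin n → F) k) • D (t y d) :=
      stepA e y _ (hdeg y (t y d) ⟨d, rfl⟩)
    rw [h1, h2, map_neg, map_smul] at h
    linear_combination (norm := module) -h
  -- Main argument
  rintro u ⟨e, rfl⟩
  set v := D (t 0 e) with hv
  set B2 : Module.Basis ((A × Fin n) × (A × Fin n)) F (L ⊗[F] L) := ℬ.tensorProduct ℬ with hB2
  -- support of elements of wittVx t 0 is concentrated in degree 0
  have hsuppVx : ∀ (w : L ⊗[F] L), w ∈ wittVx t 0 →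
      ∀ p : (A × Fin n) × (A × Fin n), p.1.1 + p.2.1 ≠ 0 → B2.repr w p = 0 := by
    intro w hw
    induction hw using Submodule.span_induction with
    | mem w hw =>
      obtain ⟨x₁, x₂, d, d', hx, rfl⟩ := hw
      rintro ⟨⟨z1, k1⟩, ⟨z2, k2⟩⟩ hp
      rw [hB2, Module.Basis.tensorProduct_repr_tmul_apply, hrepr, hrepr]
      by_cases h1 : z1 = x₁
      · by_cases h2 : z2 = x₂
        · exact absurd (by rw [h1, h2, hx]) hp
        · simp [h2]
      · simp [h1]
    | zero => intro p hp; simp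
    | add a b ha hb iha ihb =>
      intro p hp
      rw [map_add, Finsupp.add_apply, iha p hp, ihb p hp, add_zero]
    | smul r a ha iha =>
      intro p hp
      rw [map_smul, Finsupp.smul_apply, iha p hp, smul_zero]
  have hv0 : v ∈ wittVx t 0 := hdeg 0 (t 0 e) ⟨e, rfl⟩
  -- reduce to coordinates
  have : B2.repr v = 0 → v = 0 := by
    intro h
    have := congrArg B2.repr.symm h
    simpa using this
  apply this
  ext p
  rcases p with ⟨⟨x₀, i⟩, ⟨z2, j₀⟩⟩
  rw [Finsupp.coe_zero, Pi.zero_apply]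
  by_cases hdp : x₀ + z2 = 0
  swap
  · exact hsuppVx v hv0 _ hdp
  have hz2 : z2 = -x₀ := by have h := hdp; rw [add_comm] at h; exact eq_neg_of_add_eq_zero_left h
  subst hz2
  set c' : Fin n → F := fun k => B2.repr v ((x₀, k), (-x₀, j₀)) with hc'
  show c' i = 0
  -- Key coordinate equation
  have hkey : ∀ (y : A), (∀ q ∈ (B2.repr v).support, q.1.1 ≠ y + x₀) →
      ∀ (d : Fin n → F) (k : Fin n),
      (∑ m, d m * (x₀ : Fin n → F) m) * c' k
        = d k * (∑ m, c' m * (y : Fin n → F) m) := by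
    intro y hy d k
    have hvspan : v ∈ Submodule.span F {w | ∃ q : (A × Fin n) × (A × Fin n),
        (q.1.1 + q.2.1 = 0 ∧ q.1.1 ≠ y + x₀) ∧ w = B2 q} := by
      have h2 : (B2.repr v).sum (fun q r => r • B2 q) = v := by
        rw [← Finsupp.linearCombination_apply]
        exact B2.linearCombination_repr v
      rw [← h2]
      apply Submodule.finsuppSum_mem
      intro q hq
      refine Submodule.smul_mem _ _
        (Submodule.subset_span ⟨q, ⟨?_, hy q (Finsupp.mem_support_iff.mpr hq)⟩, rfl⟩)
      by_contra hne
      exact hq (hsuppVx v hv0 q hne)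
    have key : ∀ w ∈ Submodule.span F {w | ∃ q : (A × Fin n) × (A × Fin n),
        (q.1.1 + q.2.1 = 0 ∧ q.1.1 ≠ y + x₀) ∧ w = B2 q},
        B2.repr ⁅t y d, w⁆ ((y + x₀, k), (-x₀, j₀))
          = (∑ m, d m * (x₀ : Fin n → F) m) * B2.repr w ((x₀, k), (-x₀, j₀))
            - d k * (∑ m, B2.repr w ((x₀, m), (-x₀, j₀)) * (y : Fin n → F) m) := by
      intro w hw
      induction hw using Submodule.span_induction with
      | mem w hw =>
        obtain ⟨⟨⟨x, i'⟩, ⟨x', j'⟩⟩, ⟨hq0, hqy⟩, rfl⟩ := hw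
        simp only at hq0 hqy
        have hx' : x' = -x := by have h := hq0; rw [add_comm] at h; exact eq_neg_of_add_eq_zero_left h
        subst hx'
        have hs : ∀ (z : A), (∑ m, (Pi.single i' 1 : Fin n → F) m * (z : Fin n → F) m)
            = (z : Fin n → F) i' := by
          intro z
          rw [Finset.sum_eq_single i']
          · simp
          · intro b _ hb; simp [Pi.single_apply, hb]
          · simp
        have hb1 : ⁅t y d, ℬ (x, i')⁆ = t (y + x)
            ((∑ m, d m * (x : Fin n → F) m) • (Pi.single i' 1 : Fin n → F)
              - (y : Fin n → F) i' • d) := by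
          rw [hℬ, hbr, hs]
        have hs' : ∀ (z : A), (∑ m, (Pi.single j' 1 : Fin n → F) m * (z : Fin n → F) m)
            = (z : Fin n → F) j' := by
          intro z
          rw [Finset.sum_eq_single j']
          · simp
          · intro b _ hb; simp [Pi.single_apply, hb]
          · simp
        have hb2 : ⁅t y d, ℬ (-x, j')⁆ = t (y + -x)
            ((∑ m, d m * ((-x : A) : Fin n → F) m) • (Pi.single j' 1 : Fin n → F)
              - (y : Fin n → F) j' • d) := by
          rw [hℬ, hbr, hs']
        have e1 : ∀ (p q : A × Fin n), ℬ.repr (ℬ p) q = if p = q then 1 else 0 := by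
          intro p q; rw [Module.Basis.repr_self, Finsupp.single_apply]
        rw [hB2, Module.Basis.tensorProduct_apply, TensorProduct.LieModule.lie_tmul_right,
          map_add, Finsupp.add_apply, Module.Basis.tensorProduct_repr_tmul_apply,
          Module.Basis.tensorProduct_repr_tmul_apply, hb1, hb2, hrepr, hrepr, e1, e1]
        simp only [Module.Basis.tensorProduct_repr_tmul_apply, e1]
        have hne1 : ((x, i') : A × Fin n) ≠ (y + x₀, k) := by
          simp [Prod.ext_iff]; intro h; exact absurd h hqy
        by_cases hxx : x = x₀
        · have hq2 : x₀ ≠ y + x₀ := hxx ▸ hqy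
          have hy0 : ¬ y = 0 := fun h => hq2 (by rw [h, zero_add])
          by_cases hjj : j' = j₀
          · simp only [hxx, hjj]
            by_cases hik : i' = k
            · subst hik
              simp [hy0, hq2, Pi.single_apply, Finset.sum_ite_eq, Pi.sub_apply]
              ring
            · simp [hy0, hq2, hik, Ne.symm hik, Pi.single_apply, Finset.sum_ite_eq,
                Pi.sub_apply]
              ring
          · simp only [hxx]
            have h3 : ((-x₀, j') : A × Fin n) ≠ (-x₀, j₀) := by simp [hjj]
            simp [hy0, hq2, h3, hjj]
        · have h1 : y + x₀ ≠ y + x := fun h => hxx (add_left_cancel h).symm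
          simp [hxx, h1, hqy]
      | zero => simp
      | add a b ha hb iha ihb =>
        rw [lie_add, map_add, map_add]
        simp only [Finsupp.add_apply, iha, ihb]
        simp only [add_mul, Finset.sum_add_distrib]
        ring
      | smul r a ha iha =>
        rw [lie_smul, map_smul, map_smul]
        simp only [Finsupp.smul_apply, smul_eq_mul, iha]
        simp only [mul_assoc, ← Finset.mul_sum]
        ring
    have h0 := key v hvspan
    rw [stepB e y d] at h0
    rw [map_zero, Finsupp.coe_zero, Pi.zero_apply] at h0
    linear_combination -h0
  -- conclude using infinitude of multiples in A
  have hex : ∃ a : A, (a : Fin n → F) ≠ 0 := by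
    by_contra hno
    push_neg at hno
    have hbot : Submodule.span F (A : Set (Fin n → F)) = ⊥ := by
      rw [Submodule.span_eq_bot]
      intro x hx
      exact hno ⟨x, hx⟩
    rw [hA] at hbot
    have h1 : (Pi.single i 1 : Fin n → F) ∈ (⊤ : Submodule F (Fin n → F)) := trivial
    rw [hbot] at h1
    have := congrFun ((Submodule.mem_bot F).mp h1) i
    simp at this
  -- f vanishes on A
  have hf : ∀ b : A, (∑ m, c' m * (b : Fin n → F) m) = 0 := by
    intro b
    by_cases hb : (b : Fin n → F) = 0
    · simp [hb]
    · -- multiples of b avoiding the support degrees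
      set S : Finset A := (B2.repr v).support.image (fun q => q.1.1) with hS
      have hinj : Function.Injective (fun m : ℕ => (m • b + x₀ : A)) := by
        intro m₁ m₂ h
        have h2 : m₁ • b = m₂ • b := by
          have := add_right_cancel h
          exact this
        have h3 : (m₁ : F) • (b : Fin n → F) = (m₂ : F) • (b : Fin n → F) := by
          have := congrArg (fun z : A => (z : Fin n → F)) h2
          simpa [Nat.cast_smul_eq_nsmul] using this
        have h4 : ((m₁ : F) - m₂) • (b : Fin n → F) = 0 := by
          rw [sub_smul, h3, sub_self]
        rcases smul_eq_zero.mp h4 with h5 | h5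
        · have hmm : (m₁ : F) = m₂ := sub_eq_zero.mp h5
          exact_mod_cast hmm
        · exact absurd h5 hb
      have hfin : {m : ℕ | (m • b + x₀ : A) ∈ S}.Finite :=
        Set.Finite.preimage hinj.injOn S.finite_toSet
      have hinf : {m : ℕ | (m • b + x₀ : A) ∉ S}.Infinite := by
        have := hfin.infinite_compl
        convert this using 1
        rfl
      obtain ⟨m₁, hm₁⟩ := hinf.nonempty
      obtain ⟨m₂, hm₂⟩ := (hinf.diff (Set.finite_singleton m₁)).nonempty
      have hadm : ∀ (m : ℕ), (m • b + x₀ : A) ∉ S →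
          ∀ q ∈ (B2.repr v).support, q.1.1 ≠ m • b + x₀ := by
        intro m hm q hq h
        exact hm (hS ▸ Finset.mem_image.mpr ⟨q, hq, h⟩)
      have heq : ∀ (m : ℕ), (m • b + x₀ : A) ∉ S →
          (x₀ : Fin n → F) i * c' i = (m : F) * (∑ j, c' j * (b : Fin n → F) j) := by
        intro m hm
        have h := hkey (m • b) (hadm m hm) (Pi.single i 1) i
        have hl : (∑ m', (Pi.single i 1 : Fin n → F) m' * (x₀ : Fin n → F) m')
            = (x₀ : Fin n → F) i := by
          rw [Finset.sum_eq_single i]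
          · simp
          · intro b' _ hb'; simp [Pi.single_apply, hb']
          · simp
        have hr : (∑ j, c' j * ((m • b : A) : Fin n → F) j)
            = (m : F) * (∑ j, c' j * (b : Fin n → F) j) := by
          rw [Finset.mul_sum]
          refine Finset.sum_congr rfl fun j _ => ?_
          have hcoe : ((m • b : A) : Fin n → F) j = (m : F) * (b : Fin n → F) j := by
            push_cast
            simp [Nat.cast_smul_eq_nsmul]
          rw [hcoe]; ring
        rw [hl, hr] at h
        simpa using h
      have e1 := heq m₁ hm₁
      have e2 := heq m₂ (Set.mem_of_mem_diff hm₂)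
      have h12 : (m₁ : F) * (∑ j, c' j * (b : Fin n → F) j)
          = (m₂ : F) * (∑ j, c' j * (b : Fin n → F) j) := e1.symm.trans e2
      have hsub : ((m₁ : F) - m₂) * (∑ j, c' j * (b : Fin n → F) j) = 0 := by
        rw [sub_mul, h12, sub_self]
      rcases mul_eq_zero.mp hsub with h5 | h5
      · exfalso
        have hmm : (m₁ : F) = m₂ := sub_eq_zero.mp h5
        have : m₁ = m₂ := Nat.cast_injective hmm
        exact (Set.notMem_of_mem_diff hm₂) (by simp [this.symm]) 
      · exact h5
  -- from hf conclude c' i = 0 using that A spans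
  have hgen : ∀ w ∈ Submodule.span F (A : Set (Fin n → F)), (∑ m, c' m * w m) = 0 := by
    intro w hw
    induction hw using Submodule.span_induction with
    | mem w hw => exact hf ⟨w, hw⟩
    | zero => simp
    | add a b _ _ iha ihb =>
      simp only [Pi.add_apply, mul_add, Finset.sum_add_distrib, iha, ihb, add_zero]
    | smul r a _ iha =>
      simp only [Pi.smul_apply, smul_eq_mul]
      calc (∑ m, c' m * (r * a m)) = r * ∑ m, c' m * a m := by
            rw [Finset.mul_sum]
            exact Finset.sum_congr rfl fun m _ => by ring
      _ = 0 := by rw [iha, mul_zero]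
  have hfin := hgen (Pi.single i 1) (by rw [hA]; trivial)
  calc c' i = ∑ m, c' m * (Pi.single i 1 : Fin n → F) m := by
        rw [Finset.sum_eq_single i]
        · simp
        · intro b' _ hb'; simp [Pi.single_apply, hb']
        · simp
  _ = 0 := hfin
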